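/- Let S be a Dirac bundle over a compact riemannian n-manifold M. A section σ is a Killing section with constant λ (i.e. ∇_X σ = λX·σ for all X) if and only if Dσ = −nλσ and Rσ = λ²n(n−1)σ, where D is the Dirac operator and R the Weitzenböck operator. -/

import Mathlib

open scoped InnerProductSpace

/-- (Theorem C.)  Let `S` be a Dirac bundle over a compact riemannian
`n`-manifold with Dirac operator `D` and Weitzenböck operator `Rw`.  A section `σ` is a
Killing section with constant `λ` (`∇_X σ = λ X·σ` for all vector fields `X`) if and only
if `Dσ = −nλσ` and `Rw σ = λ²n(n−1)σ`.  The hypotheses are the structure equations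
(Dirac operator in a global orthonormal frame, Clifford frame relation) and the context
facts: the twistor characterization `D²σ = (n/(n−1)) Rw σ` for twistor sections; and the
modified-connection identity `(D−μ)²σ = ∇^{μ*}∇^μ σ + Rw σ + (1−n)μ²σ` with
`∇^μ_X σ = ∇_X σ + μ X·σ`, together with the fact (valid on the compact manifold `M`) that
`∇^{μ*}∇^μ σ = 0` implies that `σ` is `∇^μ`-parallel. -/
theorem killing_section_characterization
    {Γ VF : Type*} [NormedAddCommGroup Γ] [InnerProductSpace ℝ Γ]
    (n : ℕ) (hn : 2 ≤ n)
    (nabla cl : VF → Γ →ₗ[ℝ] Γ)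
    (e : Fin n → VF)
    (hcl_frame : ∀ (i : Fin n) (σ : Γ), cl (e i) (cl (e i) σ) = -σ)
    (D Rw : Γ →ₗ[ℝ] Γ)
    (hD : ∀ σ, D σ = ∑ i, cl (e i) (nabla (e i) σ))
    (htwistor_char : ∀ σ : Γ,
      (∀ X : VF, nabla X σ + ((n : ℝ)⁻¹) • cl X (D σ) = 0) →
      D (D σ) = ((n : ℝ) / ((n : ℝ) - 1)) • Rw σ)
    (lapF : ℝ → Γ →ₗ[ℝ] Γ)
    (hlapF : ∀ (μ : ℝ) (σ : Γ),
      D (D σ) - (2 * μ) • D σ + (μ ^ 2) • σ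
        = lapF μ σ + Rw σ + ((1 - (n : ℝ)) * μ ^ 2) • σ)
    (hlapF_nonneg : ∀ (μ : ℝ) (σ : Γ), 0 ≤ ⟪lapF μ σ, σ⟫_ℝ)
    (hlapF_zero : ∀ (μ : ℝ) (σ : Γ), ⟪lapF μ σ, σ⟫_ℝ = 0 → lapF μ σ = 0)
    (hlapF_parallel : ∀ (μ : ℝ) (σ : Γ), lapF μ σ = 0 →
      ∀ X : VF, nabla X σ + μ • cl X σ = 0)
    (lam : ℝ) (σ : Γ) :
    (∀ X : VF, nabla X σ = lam • cl X σ) ↔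
      (D σ = (-(n : ℝ) * lam) • σ ∧ Rw σ = (lam ^ 2 * n * ((n : ℝ) - 1)) • σ) := by

  have hn2 : (2:ℝ) ≤ (n:ℝ) := by exact_mod_cast hn
  have hn0 : (n:ℝ) ≠ 0 := by linarith
  have hn1 : (n:ℝ) - 1 ≠ 0 := by linarith
  constructor
  · intro h
    have hDσ : D σ = (-(n : ℝ) * lam) • σ := by
      rw [hD]
      have hterm : ∀ i : Fin n, cl (e i) (nabla (e i) σ) = lam • (-σ) := by
        intro i; rw [h, map_smul, hcl_frame]
      rw [Finset.sum_congr rfl (fun i _ => hterm i), Finset.sum_const,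
        Finset.card_univ, Fintype.card_fin, ← Nat.cast_smul_eq_nsmul ℝ,
        smul_smul, smul_neg, ← neg_smul]
      ring_nf
    have htw := htwistor_char σ (by
      intro X
      rw [h, hDσ, map_smul, smul_smul, ← add_smul]
      have hc : lam + (n:ℝ)⁻¹ * (-(n:ℝ)*lam) = 0 := by field_simp; ring
      rw [hc, zero_smul])
    refine ⟨hDσ, ?_⟩
    have hDD : D (D σ) = ((n:ℝ)^2 * lam^2) • σ := by
      rw [hDσ, map_smul, hDσ, smul_smul]; ring_nf
    rw [hDD] at htw
    have hc : ((n:ℝ)-1)/n * ((n:ℝ)/((n:ℝ)-1)) = 1 := by field_simp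
    have h3 := congrArg (fun x => (((n:ℝ)-1)/(n:ℝ)) • x) htw
    simp only [smul_smul] at h3
    rw [hc, one_smul] at h3
    rw [← h3]
    congr 1
    field_simp
  · rintro ⟨h1, h2⟩
    have hDD : D (D σ) = ((n:ℝ)^2 * lam^2) • σ := by
      rw [h1, map_smul, h1, smul_smul]; ring_nf
    have h3 := hlapF (-lam) σ
    have h4 : lapF (-lam) σ = D (D σ) - (2*(-lam)) • D σ + ((-lam)^2) • σ
        - Rw σ - ((1-(n:ℝ))*(-lam)^2) • σ := by rw [h3]; abel
    rw [hDD, h1, h2] at h4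
    have hzero : lapF (-lam) σ = 0 := by rw [h4]; module
    intro X
    have h5 := hlapF_parallel (-lam) σ hzero X
    have h6 : nabla X σ = -((-lam) • cl X σ) := by
      rw [eq_neg_iff_add_eq_zero]; exact h5
    simpa [neg_smul] using h6
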